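/- Let A be an mth order n-dimensional completely positive tensor with m odd, m ≥ 2. If λ < 0 is a Z-eigenvalue of A with Z-eigenvector x (i.e., A x^{m-1} = λ x and xᵀx = 1), then x is nonpositive, i.e., x_i ≤ 0 for all i. -/
import Mathlib


noncomputable section
open Classical Finset

/-- An `m`th order `n`-dimensional real tensor is completely positive if its entries are
given by a sum of entrywise products of finitely many (at least one) nonnegative vectors. -/
def IsCPTensor (m n : ℕ) (A : (Fin m → Fin n) → ℝ) : Prop :=
  ∃ r : ℕ, 0 < r ∧ ∃ u : Fin r → Fin n → ℝ,
    (∀ k i, 0 ≤ u k i) ∧ ∀ f : Fin m → Fin n, A f = ∑ k, ∏ j, u k (f j)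

/-- The `i`-th component of `A x^{m-1}`:
`(A x^{m-1})_i = Σ_{i_2,…,i_m} a_{i i_2⋯i_m} x_{i_2}⋯x_{i_m}`. -/
def contract (m n : ℕ) (hm : 0 < m) (A : (Fin m → Fin n) → ℝ) (x : Fin n → ℝ)
    (i : Fin n) : ℝ :=
  ∑ g : Fin m → Fin n,
    if g ⟨0, hm⟩ = i then A g * ∏ j ∈ Finset.univ.erase (⟨0, hm⟩ : Fin m), x (g j) else 0

/-- For a completely positive tensor of odd order m ≥ 2, a Z-eigenvector associated with a
negative Z-eigenvalue is entrywise nonpositive. -/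
theorem cp_tensor_Z_eigenvector_nonpos_odd (m n : ℕ) (hm : 2 ≤ m) (hodd : Odd m)
    (A : (Fin m → Fin n) → ℝ) (hA : IsCPTensor m n A)
    (lam : ℝ) (hlam : lam < 0) (x : Fin n → ℝ)
    (heig : ∀ i : Fin n, contract m n (by omega) A x i = lam * x i)
    (hnorm : ∑ i, (x i) ^ 2 = 1) :
    ∀ i : Fin n, x i ≤ 0 := by
  obtain ⟨r, hr, u, hu, hAu⟩ := hA
  have hm0 : 0 < m := by omega
  intro i
  set e : Fin m := ⟨0, hm0⟩ with he
  have hc : 0 ≤ contract m n hm0 A x i := by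
    have key : contract m n hm0 A x i
        = ∑ k, u k i * (∑ t, u k t * x t) ^ (m - 1) := by
      unfold contract
      have step1 : ∀ g : Fin m → Fin n,
          (if g e = i then A g * ∏ j ∈ Finset.univ.erase e, x (g j) else 0)
          = ∑ k, (if g e = i then
              u k i * ∏ j ∈ Finset.univ.erase e, (u k (g j) * x (g j)) else 0) := by
        intro g
        by_cases hg : g e = i
        · simp only [hg, if_true, hAu g, Finset.sum_mul]
          refine Finset.sum_congr rfl fun k _ => ?_
          rw [← Finset.mul_prod_erase Finset.univ (fun j => u k (g j)) (Finset.mem_univ e),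
            Finset.prod_mul_distrib, hg]
          ring
        · simp [hg]
      rw [Finset.sum_congr rfl fun g _ => step1 g, Finset.sum_comm]
      refine Finset.sum_congr rfl fun k _ => ?_
      set f : Fin m → Fin n → ℝ :=
        fun j t => if j = e then (if t = i then 1 else 0) else u k t * x t with hf
      have step2 : ∀ g : Fin m → Fin n,
          (if g e = i then u k i * ∏ j ∈ Finset.univ.erase e, (u k (g j) * x (g j)) else 0)
          = u k i * ∏ j, f j (g j) := by
        intro g
        rw [← Finset.mul_prod_erase Finset.univ (fun j => f j (g j)) (Finset.mem_univ e)]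
        have h1 : ∏ j ∈ Finset.univ.erase e, f j (g j)
            = ∏ j ∈ Finset.univ.erase e, (u k (g j) * x (g j)) := by
          refine Finset.prod_congr rfl fun j hj => ?_
          simp [hf, (Finset.mem_erase.mp hj).1]
        rw [h1]
        by_cases hg : g e = i <;> simp [hf, hg] <;> ring
      rw [Finset.sum_congr rfl fun g _ => step2 g, ← Finset.mul_sum,
        ← Fintype.piFinset_univ, ← Finset.prod_univ_sum,
        ← Finset.mul_prod_erase Finset.univ (fun j => ∑ t, f j t) (Finset.mem_univ e)]
      have h2 : (∑ t, f e t) = 1 := by simp [hf]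
      have h3 : ∏ j ∈ Finset.univ.erase e, (∑ t, f j t)
          = (∑ t, u k t * x t) ^ (m - 1) := by
        have hcon : ∀ j ∈ Finset.univ.erase e, (∑ t, f j t) = ∑ t, u k t * x t :=
          fun j hj => Finset.sum_congr rfl fun t _ => by
            simp [hf, (Finset.mem_erase.mp hj).1]
        rw [Finset.prod_congr rfl hcon, Finset.prod_const,
          Finset.card_erase_of_mem (Finset.mem_univ e), Finset.card_univ, Fintype.card_fin]
      rw [h2, h3, one_mul]
    rw [key]
    refine Finset.sum_nonneg fun k _ => mul_nonneg (hu k i) ?_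
    exact (Nat.Odd.sub_odd hodd odd_one).pow_nonneg _
  have := heig i
  by_contra h
  push_neg at h
  nlinarith [this, hc]
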